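/- Let p be an odd prime, k ≥ 3 odd, and D > 0 a nonsquare integer which is a nonzero square modulo p; fix a square root √D ∈ ℚ_p. Then the series f_{k,D}^{(p)}(z) := Σ_Q (γ_Q·e₀)·Q(z,1)^{−k}, the sum over all Heegner forms Q of discriminant D, converges absolutely and locally uniformly on the complex upper half-plane ℍ, and the resulting holomorphic function is a cusp form of weight 2k for the congruence subgroup Γ₀(p); in particular (cz+d)^{−2k}·f_{k,D}^{(p)}((az+b)/(cz+d)) = f_{k,D}^{(p)}(z) for every [[a,b],[c,d]] ∈ SL₂(ℤ) with p ∣ c. -/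

import Mathlib

open Complex Filter

/-- Heegner forms of discriminant `D` and level `p`: integral binary quadratic forms
`[a,b,c]` with `b² − 4ac = D` and `p ∣ a`. -/
def HeegnerForm (p : ℕ) (D : ℤ) : Type :=
  {Q : ℤ × ℤ × ℤ // Q.2.1 ^ 2 - 4 * Q.1 * Q.2.2 = D ∧ (p : ℤ) ∣ Q.1}

/-- The `p`-adic intersection number `(γ_Q · e₀) ∈ {±1}` of a form `[a,b,c]`, for a
fixed square root `sq` of the discriminant in `ℚ_p`: it is `+1` if the first `p`-adic
root `ρ₁ = (−b+sq)/(2a)` has `v_p(ρ₁) ≥ 0` and the second root `ρ₂ = (−b−sq)/(2a)` has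
`v_p(ρ₂) ≤ −1`, and `−1` otherwise (for Heegner forms the remaining case is
`v_p(ρ₁) ≤ −1`, `v_p(ρ₂) ≥ 0`). -/
noncomputable def gQe0 (p : ℕ) [Fact p.Prime] (sq : ℚ_[p]) (Q : ℤ × ℤ × ℤ) : ℤ :=
  if 0 ≤ (((-Q.2.1 : ℤ) + sq) / (2 * (Q.1 : ℚ_[p]))).valuation ∧
      (((-Q.2.1 : ℤ) - sq) / (2 * (Q.1 : ℚ_[p]))).valuation ≤ -1 then 1 else -1

/-- The general term `(γ_Q·e₀)·Q(z,1)^{−k}` of the series `f_{k,D}^{(p)}`. -/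
noncomputable def heegTerm (p : ℕ) [Fact p.Prime] (D : ℤ) (sq : ℚ_[p]) (k : ℕ)
    (Q : HeegnerForm p D) (z : ℂ) : ℂ :=
  ((gQe0 p sq Q.1 : ℤ) : ℂ) *
    ((Q.1.1 : ℂ) * z ^ 2 + (Q.1.2.1 : ℂ) * z + (Q.1.2.2 : ℂ)) ^ (-(k : ℤ))

namespace HF13

/-- Q(z,1) for the form v=(a,b,c), over ℂ. -/
noncomputable def P (v : ℤ × ℤ × ℤ) (z : ℂ) : ℂ :=
  (v.1 : ℂ) * z ^ 2 + (v.2.1 : ℂ) * z + (v.2.2 : ℂ)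

/-- right action of the matrix (a b; c d) on binary quadratic forms. -/
def act (a b c d : ℤ) (v : ℤ × ℤ × ℤ) : ℤ × ℤ × ℤ :=
  ⟨v.1 * a ^ 2 + v.2.1 * a * c + v.2.2 * c ^ 2,
   2 * v.1 * a * b + v.2.1 * (a * d + b * c) + 2 * v.2.2 * c * d,
   v.1 * b ^ 2 + v.2.1 * b * d + v.2.2 * d ^ 2⟩

lemma act_disc (a b c d : ℤ) (v : ℤ × ℤ × ℤ) :
    (act a b c d v).2.1 ^ 2 - 4 * (act a b c d v).1 * (act a b c d v).2.2 =
      (a * d - b * c) ^ 2 * (v.2.1 ^ 2 - 4 * v.1 * v.2.2) := by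
  obtain ⟨A, B, C⟩ := v
  simp only [act]
  ring

lemma act_act (a b c d a' b' c' d' : ℤ) (v : ℤ × ℤ × ℤ) :
    act a' b' c' d' (act a b c d v) =
      act (a * a' + b * c') (a * b' + b * d') (c * a' + d * c') (c * b' + d * d') v := by
  obtain ⟨A, B, C⟩ := v
  simp only [act, Prod.mk.injEq]
  refine ⟨by ring, by ring, by ring⟩

lemma act_inv (a b c d : ℤ) (hdet : a * d - b * c = 1) (v : ℤ × ℤ × ℤ) :
    act d (-b) (-c) a (act a b c d v) = v := by
  obtain ⟨A, B, C⟩ := v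
  simp only [act, Prod.mk.injEq]
  refine ⟨by linear_combination (A * (a * d - b * c) + A) * hdet,
    by linear_combination (B * (a * d - b * c) + B) * hdet,
    by linear_combination (C * (a * d - b * c) + C) * hdet⟩

lemma P_act (a b c d : ℤ) (v : ℤ × ℤ × ℤ) (z : ℂ) (h : (c : ℂ) * z + d ≠ 0) :
    P (act a b c d v) z = ((c : ℂ) * z + d) ^ 2 * P v (((a : ℂ) * z + b) / ((c : ℂ) * z + d)) := by
  obtain ⟨A, B, C⟩ := v
  simp only [P, act]
  push_cast
  field_simp
  ring

/-- the key identity `‖P v z‖² = (a(x²+y²)+bx+c)² + disc·y²`. -/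
lemma normSq_P (v : ℤ × ℤ × ℤ) (z : ℂ) :
    ‖P v z‖ ^ 2 =
      ((v.1 : ℝ) * (z.re ^ 2 + z.im ^ 2) + (v.2.1 : ℝ) * z.re + (v.2.2 : ℝ)) ^ 2 +
        ((v.2.1 : ℝ) ^ 2 - 4 * (v.1 : ℝ) * (v.2.2 : ℝ)) * z.im ^ 2 := by
  obtain ⟨A, B, C⟩ := v
  rw [← Complex.normSq_eq_norm_sq, Complex.normSq_apply]
  simp only [P, Complex.add_re, Complex.add_im, Complex.mul_re, Complex.mul_im,
    Complex.intCast_re, Complex.intCast_im, pow_two, Complex.mul_re, Complex.mul_im]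
  ring

lemma im_P (v : ℤ × ℤ × ℤ) (z : ℂ) :
    (P v z).im = (2 * (v.1 : ℝ) * z.re + (v.2.1 : ℝ)) * z.im := by
  obtain ⟨A, B, C⟩ := v
  simp only [P, Complex.add_im, Complex.mul_im, Complex.mul_re,
    Complex.intCast_re, Complex.intCast_im, pow_two]
  ring

/-- second identity giving `‖P‖² ≥ a²y⁴` when the discriminant is positive. -/
lemma normSq_P' (v : ℤ × ℤ × ℤ) (z : ℂ) :
    ‖P v z‖ ^ 2 =
      (v.1 : ℝ) ^ 2 * z.im ^ 4 +
      ((v.1 : ℝ) * z.re ^ 2 + (v.2.1 : ℝ) * z.re + (v.2.2 : ℝ)) ^ 2 +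
      (2 * (v.1 : ℝ) * z.re + (v.2.1 : ℝ)) ^ 2 * z.im ^ 2 / 2 +
      ((v.2.1 : ℝ) ^ 2 - 4 * (v.1 : ℝ) * (v.2.2 : ℝ)) * z.im ^ 2 / 2 := by
  rw [normSq_P]
  ring


/-- max(1,|a|,|b|) as a real number, for (a,b) : ℤ × ℤ. -/
noncomputable def mx (w : ℤ × ℤ) : ℝ := max 1 (max |(w.1 : ℝ)| |(w.2 : ℝ)|)

lemma one_le_mx (w : ℤ × ℤ) : 1 ≤ mx w := le_max_left _ _

lemma mx_pos (w : ℤ × ℤ) : 0 < mx w := lt_of_lt_of_le one_pos (one_le_mx w)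

/-- The fundamental lower bound for `‖P v z‖` in a truncated vertical strip. -/
lemma P_lower {D : ℤ} (hD : 0 < D) {X ymin : ℝ} (hX : 0 ≤ X) (hy : 0 < ymin)
    {v : ℤ × ℤ × ℤ} (hdisc : v.2.1 ^ 2 - 4 * v.1 * v.2.2 = D) {z : ℂ}
    (hre : |z.re| ≤ X) (him : ymin ≤ z.im) :
    ymin ^ 2 / (1 + ymin + 2 * X) * mx (v.1, v.2.1) ≤ ‖P v z‖ := by
  obtain ⟨A, B, C⟩ := v
  set x := z.re
  set y := z.im
  have hy0 : 0 < y := lt_of_lt_of_le hy him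
  have hDr : (1 : ℝ) ≤ (D : ℝ) := by exact_mod_cast hD
  have hden : (0 : ℝ) < 1 + ymin + 2 * X := by positivity
  have hP0 : (0 : ℝ) ≤ ‖P (A, B, C) z‖ := norm_nonneg _
  have hdiscR : ((B : ℝ)) ^ 2 - 4 * (A : ℝ) * (C : ℝ) = (D : ℝ) := by exact_mod_cast hdisc
  -- (i)  y ≤ ‖P‖
  have h1 : y ≤ ‖P (A, B, C) z‖ := by
    have := normSq_P (A, B, C) z
    simp only at this
    nlinarith [sq_nonneg ((A : ℝ) * (x ^ 2 + y ^ 2) + (B : ℝ) * x + (C : ℝ)), sq_nonneg y]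
  -- (ii)  |A| y² ≤ ‖P‖
  have h2 : |(A : ℝ)| * y ^ 2 ≤ ‖P (A, B, C) z‖ := by
    have hid := normSq_P' (A, B, C) z
    simp only at hid
    have hsq : (|(A : ℝ)| * y ^ 2) ^ 2 ≤ ‖P (A, B, C) z‖ ^ 2 := by
      rw [hid]
      have : (|(A : ℝ)| * y ^ 2) ^ 2 = (A : ℝ) ^ 2 * y ^ 4 := by
        rw [mul_pow, _root_.sq_abs]; ring
      rw [this]
      nlinarith [sq_nonneg ((A : ℝ) * x ^ 2 + (B : ℝ) * x + (C : ℝ)),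
        sq_nonneg ((2 * (A : ℝ) * x + (B : ℝ)) * y), sq_nonneg y, sq_nonneg (y*y)]
    nlinarith [abs_nonneg (A : ℝ), sq_nonneg y]
  -- (iii) |2Ax + B| * y ≤ ‖P‖
  have h3 : |2 * (A : ℝ) * x + (B : ℝ)| * y ≤ ‖P (A, B, C) z‖ := by
    have := Complex.abs_im_le_norm (P (A, B, C) z)
    rw [im_P] at this
    calc |2 * (A : ℝ) * x + (B : ℝ)| * y = |(2 * (A : ℝ) * x + (B : ℝ)) * y| := by
          rw [abs_mul, abs_of_pos hy0]
      _ ≤ _ := this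
  -- now the three max-bounds
  have hk1 : ymin ^ 2 / (1 + ymin + 2 * X) * 1 ≤ ‖P (A, B, C) z‖ := by
    rw [mul_one]
    have : ymin ^ 2 / (1 + ymin + 2 * X) ≤ ymin := by
      rw [div_le_iff₀ hden]; nlinarith
    exact le_trans (le_trans this him) h1
  have hk2 : ymin ^ 2 / (1 + ymin + 2 * X) * |(A : ℝ)| ≤ ‖P (A, B, C) z‖ := by
    have hle : ymin ^ 2 / (1 + ymin + 2 * X) ≤ ymin ^ 2 := by
      apply div_le_self (by positivity); linarith
    calc ymin ^ 2 / (1 + ymin + 2 * X) * |(A : ℝ)| ≤ ymin ^ 2 * |(A : ℝ)| := by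
          apply mul_le_mul_of_nonneg_right hle (abs_nonneg _)
      _ ≤ y ^ 2 * |(A : ℝ)| := by
          apply mul_le_mul_of_nonneg_right _ (abs_nonneg _)
          nlinarith
      _ ≤ ‖P (A, B, C) z‖ := by rw [mul_comm]; exact h2
  have hk3 : ymin ^ 2 / (1 + ymin + 2 * X) * |(B : ℝ)| ≤ ‖P (A, B, C) z‖ := by
    rw [div_mul_eq_mul_div, div_le_iff₀ hden]
    have hB : |(B : ℝ)| ≤ |2 * (A : ℝ) * x + (B : ℝ)| + 2 * |(A : ℝ)| * |x| := by
      have h' : (B : ℝ) = (2 * (A : ℝ) * x + (B : ℝ)) + -(2 * (A : ℝ) * x) := by ring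
      calc |(B : ℝ)| = |(2 * (A : ℝ) * x + (B : ℝ)) + -(2 * (A : ℝ) * x)| := by rw [← h']
        _ ≤ |2 * (A : ℝ) * x + (B : ℝ)| + |-(2 * (A : ℝ) * x)| := abs_add_le _ _
        _ = |2 * (A : ℝ) * x + (B : ℝ)| + 2 * |(A : ℝ)| * |x| := by
            rw [abs_neg, abs_mul, abs_mul, _root_.abs_two]
    have e1 : ymin ^ 2 * |2 * (A : ℝ) * x + (B : ℝ)| ≤ ymin * ‖P (A, B, C) z‖ := by
      have e1a : ymin ^ 2 * |2 * (A : ℝ) * x + (B : ℝ)|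
          = ymin * (|2 * (A : ℝ) * x + (B : ℝ)| * ymin) := by ring
      rw [e1a]
      apply mul_le_mul_of_nonneg_left _ hy.le
      calc |2 * (A : ℝ) * x + (B : ℝ)| * ymin ≤ |2 * (A : ℝ) * x + (B : ℝ)| * y :=
            mul_le_mul_of_nonneg_left him (abs_nonneg _)
        _ ≤ ‖P (A, B, C) z‖ := h3
    have e2 : ymin ^ 2 * (2 * |(A : ℝ)| * |x|) ≤ 2 * X * ‖P (A, B, C) z‖ := by
      have e2a : ymin ^ 2 * (2 * |(A : ℝ)| * |x|) = 2 * |x| * (|(A : ℝ)| * ymin ^ 2) := by ring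
      rw [e2a]
      have e2b : |(A : ℝ)| * ymin ^ 2 ≤ ‖P (A, B, C) z‖ := by
        refine le_trans (mul_le_mul_of_nonneg_left ?_ (abs_nonneg _)) h2
        nlinarith
      calc 2 * |x| * (|(A : ℝ)| * ymin ^ 2) ≤ 2 * X * (|(A : ℝ)| * ymin ^ 2) := by
            apply mul_le_mul_of_nonneg_right (by linarith) (by positivity)
        _ ≤ 2 * X * ‖P (A, B, C) z‖ := by
            apply mul_le_mul_of_nonneg_left e2b (by positivity)
    have e3 : ymin ^ 2 * |(B : ℝ)| ≤ ymin * ‖P (A, B, C) z‖ + 2 * X * ‖P (A, B, C) z‖ := by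
      calc ymin ^ 2 * |(B : ℝ)|
          ≤ ymin ^ 2 * (|2 * (A : ℝ) * x + (B : ℝ)| + 2 * |(A : ℝ)| * |x|) :=
            mul_le_mul_of_nonneg_left hB (by positivity)
        _ = ymin ^ 2 * |2 * (A : ℝ) * x + (B : ℝ)| + ymin ^ 2 * (2 * |(A : ℝ)| * |x|) := by ring
        _ ≤ _ := add_le_add e1 e2
    have e4 : ‖P (A, B, C) z‖ * (1 + ymin + 2 * X)
        = ‖P (A, B, C) z‖ + (ymin * ‖P (A, B, C) z‖ + 2 * X * ‖P (A, B, C) z‖) := by ring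
    rw [e4]
    linarith
  have : mx (A, B) = max 1 (max |(A : ℝ)| |(B : ℝ)|) := rfl
  rw [this]
  rcases max_cases (1 : ℝ) (max |(A : ℝ)| |(B : ℝ)|) with ⟨h, _⟩ | ⟨h, _⟩ <;> rw [h]
  · exact hk1
  · rcases max_cases |(A : ℝ)| |(B : ℝ)| with ⟨h', _⟩ | ⟨h', _⟩ <;> rw [h']
    · exact hk2
    · exact hk3

/-- summability of the comparison series over ℤ². -/
lemma summable_mx_zpow {k : ℕ} (hk : 3 ≤ k) :
    Summable fun w : ℤ × ℤ => mx w ^ (-(k : ℤ)) := by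
  have hk' : (2 : ℝ) < (k : ℝ) := by exact_mod_cast lt_of_lt_of_le (by norm_num) hk
  have h0 : Summable fun x : Fin 2 → ℤ => ‖x‖ ^ (-(k : ℝ)) :=
    EisensteinSeries.summable_one_div_norm_rpow hk'
  have h1 : Summable fun x : Fin 2 → ℤ =>
      (if x = 0 then (1 : ℝ) else 0) + ‖x‖ ^ (-(k : ℝ)) := by
    apply Summable.add _ h0
    apply summable_of_ne_finset_zero (s := {0})
    intro x hx
    simp only [Finset.mem_singleton] at hx
    simp [hx]
  have h2 : Summable fun x : Fin 2 → ℤ => (max 1 ‖x‖) ^ (-(k : ℤ)) := by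
    apply h1.of_nonneg_of_le (fun x => zpow_nonneg (le_trans zero_le_one (le_max_left _ _)) _)
    intro x
    rcases eq_or_ne x 0 with rfl | hx
    · have hk0 : (0:ℝ) < (k:ℝ) := by
        have : 0 < k := lt_of_lt_of_le (by norm_num) hk
        exact_mod_cast this
      simp [Real.zero_rpow (neg_lt_zero.mpr hk0).ne]
    · have hxn : (1 : ℝ) ≤ ‖x‖ := by
        rw [EisensteinSeries.norm_eq_max_natAbs]
        have : x 0 ≠ 0 ∨ x 1 ≠ 0 := by
          by_contra hc
          push_neg at hc
          apply hx
          funext i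
          fin_cases i <;> simp [hc.1, hc.2]
        rcases this with h | h
        · have : 1 ≤ (x 0).natAbs := Int.natAbs_pos.mpr h
          exact_mod_cast le_trans (Nat.one_le_cast.mpr this) (by exact_mod_cast le_max_left _ _)
        · have : 1 ≤ (x 1).natAbs := Int.natAbs_pos.mpr h
          exact_mod_cast le_trans (Nat.one_le_cast.mpr this) (by exact_mod_cast le_max_right _ _)
      rw [max_eq_right hxn]
      have hxp : (0 : ℝ) < ‖x‖ := lt_of_lt_of_le one_pos hxn
      rw [← Real.rpow_intCast ‖x‖ (-(k : ℤ))]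
      simp only [if_neg hx, zero_add, Int.cast_neg, Int.cast_natCast]
      exact le_refl _
  have h3 := h2.comp_injective (i := fun w : ℤ × ℤ => ![w.1, w.2]) ?_
  · apply h3.congr
    intro w
    simp only [Function.comp_apply]
    congr 2
    rw [EisensteinSeries.norm_eq_max_natAbs]
    simp only [Matrix.cons_val_zero, Matrix.cons_val_one, Matrix.head_cons, mx]
    rw [Nat.cast_max]
    congr 1 <;> rw [Nat.cast_natAbs] <;> push_cast <;> ring
  · intro w w' h
    have h0 := congrFun h 0
    have h1 := congrFun h 1
    simp only [Matrix.cons_val_zero, Matrix.cons_val_one, Matrix.head_cons] at h0 h1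
    exact Prod.ext h0 h1


section Padics

variable {p : ℕ} [Fact p.Prime]

lemma norm_int_eq_one_of_not_dvd {a : ℤ} (h : ¬ (p : ℤ) ∣ a) : ‖(a : ℚ_[p])‖ = 1 := by
  rcases lt_or_eq_of_le (Padic.norm_int_le_one (p := p) a) with h' | h'
  · exact absurd ((Padic.norm_intCast_lt_one_iff).mp h') h
  · exact h'

lemma not_dvd_a_of_det {a b c d : ℤ} (hdet : a * d - b * c = 1) (hc : (p : ℤ) ∣ c) :
    ¬ (p : ℤ) ∣ a := by
  intro h
  have h1 : (p : ℤ) ∣ a * d - b * c := dvd_sub (h.mul_right d) (hc.mul_left b)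
  rw [hdet] at h1
  have := Int.le_of_dvd one_pos h1
  have hp2 := (Fact.out : p.Prime).two_le
  omega

lemma not_dvd_d_of_det {a b c d : ℤ} (hdet : a * d - b * c = 1) (hc : (p : ℤ) ∣ c) :
    ¬ (p : ℤ) ∣ d := by
  intro h
  have h1 : (p : ℤ) ∣ a * d - b * c := dvd_sub (h.mul_left a) (hc.mul_left b)
  rw [hdet] at h1
  have := Int.le_of_dvd one_pos h1
  have hp2 := (Fact.out : p.Prime).two_le
  omega

/-- bridge between valuation and norm : `v(x) ≤ -1 ↔ p ≤ ‖x‖`. -/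
lemma val_le_neg_one_iff_norm {x : ℚ_[p]} : x.valuation ≤ -1 ↔ (p : ℝ) ≤ ‖x‖ := by
  have hp1 : (1 : ℝ) < (p : ℝ) := by exact_mod_cast (Fact.out : p.Prime).one_lt
  constructor
  · intro h
    have hx : x ≠ 0 := by
      intro h0
      rw [h0, Padic.valuation_zero] at h
      omega
    rw [Padic.norm_eq_zpow_neg_valuation hx]
    calc (p : ℝ) = (p : ℝ) ^ (1 : ℤ) := (zpow_one _).symm
      _ ≤ (p : ℝ) ^ (-x.valuation) := by
          apply zpow_le_zpow_right₀ hp1.le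
          omega
  · intro h
    have hx : x ≠ 0 := by
      intro h0
      rw [h0, norm_zero] at h
      linarith
    rw [Padic.norm_eq_zpow_neg_valuation hx] at h
    have h1 : (p : ℝ) ^ (1 : ℤ) ≤ (p : ℝ) ^ (-x.valuation) := by rwa [zpow_one]
    have := (zpow_le_zpow_iff_right₀ hp1).mp h1
    omega

/-- Möbius transformations in `Γ₀(p)` preserve `‖ρ‖ ≤ 1`. -/
lemma mobius_norm_le_one {a b c d : ℤ} (hdet : a * d - b * c = 1) (hc : (p : ℤ) ∣ c)
    {ρ : ℚ_[p]} (h1 : ‖ρ‖ ≤ 1) :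
    ‖((d : ℚ_[p]) * ρ - b) / ((a : ℚ_[p]) - c * ρ)‖ ≤ 1 := by
  have ha : ‖(a : ℚ_[p])‖ = 1 := norm_int_eq_one_of_not_dvd (not_dvd_a_of_det hdet hc)
  have hcρ : ‖(c : ℚ_[p]) * ρ‖ < 1 := by
    rw [norm_mul]
    calc ‖(c : ℚ_[p])‖ * ‖ρ‖ ≤ ‖(c : ℚ_[p])‖ * 1 :=
          mul_le_mul_of_nonneg_left h1 (norm_nonneg _)
      _ = ‖(c : ℚ_[p])‖ := mul_one _
      _ < 1 := (Padic.norm_intCast_lt_one_iff).mpr hc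
  have hden : ‖(a : ℚ_[p]) - c * ρ‖ = 1 := by
    rw [sub_eq_add_neg, Padic.add_eq_max_of_ne (by rw [ha, norm_neg]; exact (ne_of_lt hcρ).symm),
      ha, norm_neg, max_eq_left hcρ.le]
  have hnum : ‖(d : ℚ_[p]) * ρ - b‖ ≤ 1 := by
    rw [sub_eq_add_neg]
    refine le_trans (Padic.nonarchimedean _ _) (max_le ?_ ?_)
    · rw [norm_mul]
      calc ‖(d : ℚ_[p])‖ * ‖ρ‖ ≤ 1 * 1 :=
          mul_le_mul (Padic.norm_int_le_one d) h1 (norm_nonneg _) zero_le_one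
        _ = 1 := by norm_num
    · rw [norm_neg]
      exact Padic.norm_int_le_one b
  rw [norm_div, hden, div_one]
  exact hnum

/-- Möbius transformations in `Γ₀(p)` preserve `p ≤ ‖ρ‖`. -/
lemma mobius_norm_ge_p {a b c d : ℤ} (hdet : a * d - b * c = 1) (hc : (p : ℤ) ∣ c)
    {ρ : ℚ_[p]} (hden0 : (a : ℚ_[p]) - c * ρ ≠ 0) (h2 : (p : ℝ) ≤ ‖ρ‖) :
    (p : ℝ) ≤ ‖((d : ℚ_[p]) * ρ - b) / ((a : ℚ_[p]) - c * ρ)‖ := by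
  have hp0 : (0 : ℝ) < p := by exact_mod_cast (Fact.out : p.Prime).pos
  have hp1 : (1 : ℝ) < (p : ℝ) := by exact_mod_cast (Fact.out : p.Prime).one_lt
  have hd1 : ‖(d : ℚ_[p])‖ = 1 := norm_int_eq_one_of_not_dvd (not_dvd_d_of_det hdet hc)
  have hdρ : ‖(d : ℚ_[p]) * ρ‖ = ‖ρ‖ := by rw [norm_mul, hd1, one_mul]
  have hnum : ‖(d : ℚ_[p]) * ρ - b‖ = ‖ρ‖ := by
    rw [sub_eq_add_neg, Padic.add_eq_max_of_ne, hdρ, norm_neg,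
      max_eq_left (le_trans (Padic.norm_int_le_one b) (by linarith))]
    rw [hdρ, norm_neg]
    intro hembed
    have := Padic.norm_int_le_one (p := p) b
    rw [← hembed] at this
    linarith
  have hcn : ‖(c : ℚ_[p])‖ ≤ (p : ℝ)⁻¹ := by
    have := (Padic.norm_int_le_pow_iff_dvd (p := p) c 1).mpr (by simpa using hc)
    simpa using this
  have hden : ‖(a : ℚ_[p]) - c * ρ‖ ≤ ‖ρ‖ / p := by
    rw [sub_eq_add_neg]
    refine le_trans (Padic.nonarchimedean _ _) (max_le ?_ ?_)
    · calc ‖(a : ℚ_[p])‖ ≤ 1 := Padic.norm_int_le_one a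
        _ ≤ ‖ρ‖ / p := by rw [le_div_iff₀ hp0]; linarith
    · rw [norm_neg, norm_mul, div_eq_inv_mul ‖ρ‖]
      exact mul_le_mul hcn (le_refl _) (norm_nonneg _) (by positivity)
  have hdenpos : 0 < ‖(a : ℚ_[p]) - c * ρ‖ := norm_pos_iff.mpr hden0
  rw [norm_div, hnum, le_div_iff₀ hdenpos]
  calc (p : ℝ) * ‖(a : ℚ_[p]) - c * ρ‖ ≤ (p : ℝ) * (‖ρ‖ / p) :=
      mul_le_mul_of_nonneg_left hden hp0.le
    _ = ‖ρ‖ := by field_simp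

/-- a square root of a nonsquare integer in `ℚ_p` is irrational. -/
lemma sq_ne_rat {D : ℤ} (hDns : ¬ IsSquare D) {sq : ℚ_[p]} (hsq : sq ^ 2 = (D : ℚ_[p]))
    (q : ℚ) : (q : ℚ_[p]) ≠ sq := by
  intro h
  apply hDns
  have h1 : ((q ^ 2 : ℚ) : ℚ_[p]) = (((D : ℚ) : ℚ_[p])) := by
    push_cast
    rw [h, hsq]
  have h2 : (q : ℚ) ^ 2 = ((D : ℤ) : ℚ) := by exact_mod_cast Rat.cast_injective h1
  have h3 : IsSquare ((D : ℤ) : ℚ) := ⟨q, by rw [← h2]; ring⟩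
  exact (Rat.isSquare_intCast_iff).mp h3

lemma lead_ne_zero {D : ℤ} (hDns : ¬ IsSquare D) {A B C : ℤ}
    (hdisc : B ^ 2 - 4 * A * C = D) : A ≠ 0 := by
  intro h
  apply hDns
  refine ⟨B, ?_⟩
  rw [← hdisc, h]
  ring

/-- nonvanishing of the Möbius denominator at an irrational point. -/
lemma mobius_den_ne_zero {t : ℚ_[p]} (htr : ∀ q : ℚ, (q : ℚ_[p]) ≠ t)
    {A B : ℤ} (hA : A ≠ 0) {a b c d : ℤ} (hdet : a * d - b * c = 1) :
    (a : ℚ_[p]) - c * ((((-B : ℤ) : ℚ_[p]) + t) / (2 * (A : ℚ_[p]))) ≠ 0 := by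
  intro h
  have hA0 : ((A : ℚ_[p])) ≠ 0 := Int.cast_ne_zero.mpr hA
  have h2A : (2 * (A : ℚ_[p])) ≠ 0 := by
    apply mul_ne_zero _ hA0
    exact two_ne_zero
  rcases eq_or_ne c 0 with rfl | hc0
  · rw [Int.cast_zero, zero_mul, sub_zero, Int.cast_eq_zero] at h
    rw [h] at hdet
    omega
  · have hc0' : ((c : ℚ_[p])) ≠ 0 := Int.cast_ne_zero.mpr hc0
    rw [sub_eq_zero] at h
    have h2 : (a : ℚ_[p]) * (2 * A) = c * (-(B : ℚ_[p]) + t) := by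
      field_simp [h2A] at h
      push_cast at h
      linear_combination h
    apply htr ((2 * A * a + c * B : ℤ) / (c : ℚ))
    push_cast
    rw [div_eq_iff hc0']
    linear_combination h2

/-- the key polynomial identity for the transformation of the `p`-adic roots. -/
lemma root_key {K : Type*} [Field K] (α β γ δ A B C t : K)
    (ht : t ^ 2 = B ^ 2 - 4 * A * C) (hdet : α * δ - β * γ = 1) :
    (-(2 * A * α * β + B * (α * δ + β * γ) + 2 * C * γ * δ) + t) * (2 * A * α - γ * (-B + t))
      = 2 * (A * α ^ 2 + B * α * γ + C * γ ^ 2) * (δ * (-B + t) - 2 * A * β) := by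
  linear_combination (-γ) * ht +
    (-γ * B * t + γ * B ^ 2 - 4 * γ * A * C - 2 * α * A * t) * hdet

/-- transformation of a root of a quadratic form under the action. -/
lemma root_transfer {D : ℤ} (hDns : ¬ IsSquare D) {t : ℚ_[p]} (ht : t ^ 2 = (D : ℚ_[p]))
    (htr : ∀ q : ℚ, (q : ℚ_[p]) ≠ t)
    {A B C : ℤ} (hdisc : B ^ 2 - 4 * A * C = D) {a b c d : ℤ} (hdet : a * d - b * c = 1) :
    (((-(act a b c d (A, B, C)).2.1 : ℤ) : ℚ_[p]) + t) / (2 * ((act a b c d (A, B, C)).1 : ℚ_[p]))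
      = ((d : ℚ_[p]) * ((((-B : ℤ) : ℚ_[p]) + t) / (2 * (A : ℚ_[p]))) - b) /
        ((a : ℚ_[p]) - c * ((((-B : ℤ) : ℚ_[p]) + t) / (2 * (A : ℚ_[p])))) := by
  have hA : A ≠ 0 := lead_ne_zero hDns hdisc
  have hA0 : ((A : ℚ_[p])) ≠ 0 := Int.cast_ne_zero.mpr hA
  have h2A : (2 * (A : ℚ_[p])) ≠ 0 := mul_ne_zero two_ne_zero hA0
  have hdisc' : (act a b c d (A, B, C)).2.1 ^ 2
      - 4 * (act a b c d (A, B, C)).1 * (act a b c d (A, B, C)).2.2 = D := by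
    rw [act_disc, hdet]
    simpa using hdisc
  have hA' : (act a b c d (A, B, C)).1 ≠ 0 := lead_ne_zero hDns hdisc'
  have hA'0 : (((act a b c d (A, B, C)).1 : ℤ) : ℚ_[p]) ≠ 0 := Int.cast_ne_zero.mpr hA'
  have h2A' : (2 * (((act a b c d (A, B, C)).1 : ℤ) : ℚ_[p])) ≠ 0 := mul_ne_zero two_ne_zero hA'0
  have hden := mobius_den_ne_zero (A := A) (B := B) htr hA hdet
  have htB : t ^ 2 = (B : ℚ_[p]) ^ 2 - 4 * A * C := by
    rw [ht]
    exact_mod_cast (congrArg (fun n : ℤ => (n : ℚ_[p])) hdisc).symm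
  have hdet' : (a : ℚ_[p]) * d - b * c = 1 := by exact_mod_cast hdet
  -- numerator and denominator identities
  have e1 : (a : ℚ_[p]) - c * ((((-B : ℤ) : ℚ_[p]) + t) / (2 * (A : ℚ_[p])))
      = (2 * A * a - c * (-(B : ℚ_[p]) + t)) / (2 * (A : ℚ_[p])) := by
    push_cast
    field_simp
  have e2 : (d : ℚ_[p]) * ((((-B : ℤ) : ℚ_[p]) + t) / (2 * (A : ℚ_[p]))) - b
      = ((d : ℚ_[p]) * (-(B : ℚ_[p]) + t) - 2 * A * b) / (2 * (A : ℚ_[p])) := by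
    push_cast
    field_simp
  have hnum1 : (2 * (A : ℚ_[p]) * a - c * (-(B : ℚ_[p]) + t)) ≠ 0 := by
    intro h0
    apply hden
    rw [e1, h0, zero_div]
  rw [e1, e2, div_div_div_cancel_right₀ h2A]
  rw [div_eq_div_iff (by exact h2A') hnum1]
  have hact1 : (((act a b c d (A, B, C)).1 : ℤ) : ℚ_[p])
      = (A : ℚ_[p]) * a ^ 2 + B * a * c + C * c ^ 2 := by
    simp only [act]
    push_cast
    ring
  have hact2 : (((-(act a b c d (A, B, C)).2.1 : ℤ)) : ℚ_[p])
      = -(2 * (A : ℚ_[p]) * a * b + B * (a * d + b * c) + 2 * C * c * d) := by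
    simp only [act]
    push_cast
    ring
  rw [hact1, hact2]
  have := root_key (a : ℚ_[p]) b c d A B C t htB hdet'
  linear_combination this

end Padics

section Transfer

variable {p : ℕ} [Fact p.Prime]

lemma cond_act {D : ℤ} (hDns : ¬ IsSquare D) {sq : ℚ_[p]} (hsq : sq ^ 2 = (D : ℚ_[p]))
    {A B C : ℤ} (hdisc : B ^ 2 - 4 * A * C = D)
    {a b c d : ℤ} (hdet : a * d - b * c = 1) (hc : (p : ℤ) ∣ c)
    (h1 : ‖(((-B : ℤ) : ℚ_[p]) + sq) / (2 * (A : ℚ_[p]))‖ ≤ 1)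
    (h2 : (p : ℝ) ≤ ‖(((-B : ℤ) : ℚ_[p]) - sq) / (2 * (A : ℚ_[p]))‖) :
    ‖(((-(act a b c d (A, B, C)).2.1 : ℤ) : ℚ_[p]) + sq) /
        (2 * ((act a b c d (A, B, C)).1 : ℚ_[p]))‖ ≤ 1 ∧
    (p : ℝ) ≤ ‖(((-(act a b c d (A, B, C)).2.1 : ℤ) : ℚ_[p]) - sq) /
        (2 * ((act a b c d (A, B, C)).1 : ℚ_[p]))‖ := by
  have htr1 : ∀ q : ℚ, (q : ℚ_[p]) ≠ sq := sq_ne_rat hDns hsq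
  have htr2 : ∀ q : ℚ, (q : ℚ_[p]) ≠ -sq := by
    intro q h
    apply htr1 (-q)
    push_cast
    rw [h]
    ring
  have hsq2 : (-sq) ^ 2 = (D : ℚ_[p]) := by rw [neg_sq]; exact hsq
  have hA : A ≠ 0 := lead_ne_zero hDns hdisc
  constructor
  · rw [root_transfer hDns hsq htr1 hdisc hdet]
    exact mobius_norm_le_one hdet hc h1
  · rw [sub_eq_add_neg, root_transfer hDns hsq2 htr2 hdisc hdet]
    rw [sub_eq_add_neg] at h2
    exact mobius_norm_ge_p hdet hc (mobius_den_ne_zero htr2 hA hdet) h2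

lemma gQe0_act {D : ℤ} (hDns : ¬ IsSquare D) {sq : ℚ_[p]} (hsq : sq ^ 2 = (D : ℚ_[p]))
    {v : ℤ × ℤ × ℤ} (hdisc : v.2.1 ^ 2 - 4 * v.1 * v.2.2 = D)
    {a b c d : ℤ} (hdet : a * d - b * c = 1) (hc : (p : ℤ) ∣ c) :
    gQe0 p sq (act a b c d v) = gQe0 p sq v := by
  obtain ⟨A, B, C⟩ := v
  have hdisc' : (act a b c d (A, B, C)).2.1 ^ 2
      - 4 * (act a b c d (A, B, C)).1 * (act a b c d (A, B, C)).2.2 = D := by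
    rw [act_disc, hdet]
    simpa using hdisc
  have hdet2 : d * a - (-b) * (-c) = 1 := by linear_combination hdet
  have hc2 : (p : ℤ) ∣ (-c) := dvd_neg.mpr hc
  unfold gQe0
  simp only [← Padic.norm_le_one_iff_val_nonneg, val_le_neg_one_iff_norm]
  refine if_congr ⟨fun h => ?_, fun h => ?_⟩ rfl rfl
  · -- backward : condition for act implies condition for v, via the inverse matrix
    have := cond_act hDns hsq hdisc' hdet2 hc2 h.1 h.2
    rwa [act_inv a b c d hdet (A, B, C)] at this
  · exact cond_act hDns hsq hdisc hdet hc h.1 h.2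

end Transfer

section Heeg

variable {p : ℕ} [Fact p.Prime] {D : ℤ}

lemma hf_disc (Q : HeegnerForm p D) : Q.1.2.1 ^ 2 - 4 * Q.1.1 * Q.1.2.2 = D := Q.2.1

lemma hf_dvd (Q : HeegnerForm p D) : (p : ℤ) ∣ Q.1.1 := Q.2.2

/-- the action of `Γ₀(p)` on Heegner forms. -/
def heqv (hDns : ¬ IsSquare D) (a b c d : ℤ) (hdet : a * d - b * c = 1) (hc : (p : ℤ) ∣ c) :
    HeegnerForm p D ≃ HeegnerForm p D where
  toFun Q := ⟨act a b c d Q.1, by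
    constructor
    · rw [act_disc, hdet, hf_disc Q]; ring
    · show (p : ℤ) ∣ Q.1.1 * a ^ 2 + Q.1.2.1 * a * c + Q.1.2.2 * c ^ 2
      exact dvd_add (dvd_add ((hf_dvd Q).mul_right _) (hc.mul_left _))
        ((dvd_pow hc two_ne_zero).mul_left _)⟩
  invFun Q := ⟨act d (-b) (-c) a Q.1, by
    constructor
    · rw [act_disc, show d * a - (-b) * (-c) = 1 by linear_combination hdet, hf_disc Q]; ring
    · show (p : ℤ) ∣ Q.1.1 * d ^ 2 + Q.1.2.1 * d * (-c) + Q.1.2.2 * (-c) ^ 2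
      exact dvd_add (dvd_add ((hf_dvd Q).mul_right _) ((dvd_neg.mpr hc).mul_left _))
        ((dvd_pow (dvd_neg.mpr hc) two_ne_zero).mul_left _)⟩
  left_inv Q := Subtype.ext (act_inv a b c d hdet Q.1)
  right_inv Q := Subtype.ext (by
    have := act_inv d (-b) (-c) a (by linear_combination hdet) Q.1
    simpa using this)

lemma cd_ne_zero {c d : ℤ} (h : ¬ (c = 0 ∧ d = 0)) {z : ℂ} (hz : 0 < z.im) :
    (c : ℂ) * z + d ≠ 0 := by
  rcases eq_or_ne c 0 with rfl | hc0
  · have hd : d ≠ 0 := fun hd => h ⟨rfl, hd⟩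
    simp only [Int.cast_zero, zero_mul, zero_add, ne_eq, Int.cast_eq_zero]
    exact hd
  · intro h0
    have him := congrArg Complex.im h0
    simp only [Complex.add_im, Complex.mul_im, Complex.intCast_im, Complex.intCast_re,
      Complex.zero_im] at him
    have : (c : ℝ) * z.im = 0 := by linarith
    rcases mul_eq_zero.mp this with h' | h'
    · exact hc0 (by exact_mod_cast h')
    · linarith

lemma det_cd_ne_zero {a b c d : ℤ} (hdet : a * d - b * c = 1) {z : ℂ} (hz : 0 < z.im) :
    (c : ℂ) * z + d ≠ 0 := by
  apply cd_ne_zero _ hz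
  rintro ⟨rfl, rfl⟩
  simp at hdet

lemma norm_gQe0 (sq : ℚ_[p]) (v : ℤ × ℤ × ℤ) : ‖((gQe0 p sq v : ℤ) : ℂ)‖ = 1 := by
  unfold gQe0
  split_ifs <;> simp

lemma norm_heegTerm (sq : ℚ_[p]) (k : ℕ) (Q : HeegnerForm p D) (z : ℂ) :
    ‖heegTerm p D sq k Q z‖ = ‖P Q.1 z‖ ^ (-(k : ℤ)) := by
  unfold heegTerm
  rw [norm_mul, norm_gQe0, one_mul, norm_zpow]
  rfl

/-- the main term transformation law. -/
lemma heegTerm_act (hDns : ¬ IsSquare D) {sq : ℚ_[p]} (hsq : sq ^ 2 = (D : ℚ_[p])) (k : ℕ)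
    {a b c d : ℤ} (hdet : a * d - b * c = 1) (hc : (p : ℤ) ∣ c)
    (Q : HeegnerForm p D) {z : ℂ} (hz : 0 < z.im) :
    ((c : ℂ) * z + d) ^ (2 * k : ℤ) * heegTerm p D sq k ((heqv hDns a b c d hdet hc) Q) z
      = heegTerm p D sq k Q (((a : ℂ) * z + b) / ((c : ℂ) * z + d)) := by
  have hcd : (c : ℂ) * z + d ≠ 0 := det_cd_ne_zero hdet hz
  have hP : P ((heqv hDns a b c d hdet hc Q)).1 z =
      ((c : ℂ) * z + d) ^ 2 * P Q.1 (((a : ℂ) * z + b) / ((c : ℂ) * z + d)) :=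
    P_act a b c d Q.1 z hcd
  have hg : gQe0 p sq ((heqv hDns a b c d hdet hc Q)).1 = gQe0 p sq Q.1 :=
    gQe0_act hDns hsq (hf_disc Q) hdet hc
  unfold heegTerm
  show ((c : ℂ) * z + d) ^ (2 * k : ℤ) *
      (((gQe0 p sq ((heqv hDns a b c d hdet hc Q)).1 : ℤ) : ℂ) *
        P ((heqv hDns a b c d hdet hc Q)).1 z ^ (-(k : ℤ)))
    = ((gQe0 p sq Q.1 : ℤ) : ℂ) *
        P Q.1 (((a : ℂ) * z + b) / ((c : ℂ) * z + d)) ^ (-(k : ℤ))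
  rw [hg, hP]
  rw [mul_zpow]
  have h2 : (((c : ℂ) * z + d) ^ 2) ^ (-(k : ℤ)) = ((c : ℂ) * z + d) ^ (-(2 * k : ℤ)) := by
    rw [← zpow_natCast (((c : ℂ) * z + d)) 2, ← zpow_mul]
    norm_num
  have h3 : ((c : ℂ) * z + d) ^ (2 * k : ℤ) * ((c : ℂ) * z + d) ^ (-(2 * k : ℤ)) = 1 := by
    rw [← zpow_add₀ hcd]
    simp
  rw [h2, mul_left_comm, ← mul_assoc (((c : ℂ) * z + d) ^ (2 * k : ℤ)), h3, one_mul]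

/-- the tsum transformation law. -/
lemma tsum_transform (hDns : ¬ IsSquare D) {sq : ℚ_[p]} (hsq : sq ^ 2 = (D : ℚ_[p])) (k : ℕ)
    {a b c d : ℤ} (hdet : a * d - b * c = 1) (hc : (p : ℤ) ∣ c)
    {z : ℂ} (hz : 0 < z.im) :
    ∑' Q : HeegnerForm p D, heegTerm p D sq k Q (((a : ℂ) * z + b) / ((c : ℂ) * z + d))
      = ((c : ℂ) * z + d) ^ (2 * k : ℤ) * ∑' Q : HeegnerForm p D, heegTerm p D sq k Q z := by
  rw [← Equiv.tsum_eq (heqv hDns a b c d hdet hc) (fun Q => heegTerm p D sq k Q z)]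
  rw [← tsum_mul_left]
  exact tsum_congr fun Q => (heegTerm_act hDns hsq k hdet hc Q hz).symm

end Heeg

section Summab

variable {p : ℕ} [Fact p.Prime] {D : ℤ}

lemma zpow_neg_anti {u w : ℝ} (hu : 0 < u) (h : u ≤ w) (k : ℕ) :
    w ^ (-(k : ℤ)) ≤ u ^ (-(k : ℤ)) := by
  have hw : 0 < w := lt_of_lt_of_le hu h
  rw [zpow_neg, zpow_neg, zpow_natCast, zpow_natCast,
    inv_le_inv₀ (by positivity) (by positivity)]
  exact pow_le_pow_left₀ hu.le h k

lemma third_eq {A B C C' : ℤ} (hA : A ≠ 0) (hd : B ^ 2 - 4 * A * C = D)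
    (hd' : B ^ 2 - 4 * A * C' = D) : C = C' := by
  have h4 : (4 * A) * C = (4 * A) * C' := by linear_combination hd' - hd
  exact mul_left_cancel₀ (by simpa using hA) h4

lemma hf_inj (hDns : ¬ IsSquare D) :
    Function.Injective (fun Q : HeegnerForm p D => (Q.1.1, Q.1.2.1)) := by
  rintro ⟨⟨A, B, C⟩, hQ⟩ ⟨⟨A', B', C'⟩, hR⟩ h
  simp only [Prod.mk.injEq] at h
  obtain ⟨rfl, rfl⟩ := h
  have hC : C = C' := third_eq (lead_ne_zero hDns hQ.1) hQ.1 hR.1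
  subst hC
  rfl

lemma summable_bound_heeg (hDns : ¬ IsSquare D) {k : ℕ} (hk : 3 ≤ k) (κ : ℝ) :
    Summable (fun Q : HeegnerForm p D => κ * mx (Q.1.1, Q.1.2.1) ^ (-(k : ℤ))) :=
  (((summable_mx_zpow hk).comp_injective (hf_inj hDns))).mul_left κ

lemma heegTerm_le (hD : 0 < D) (sq : ℚ_[p]) (k : ℕ)
    {X ymin : ℝ} (hX : 0 ≤ X) (hy : 0 < ymin) (Q : HeegnerForm p D) {z : ℂ}
    (hre : |z.re| ≤ X) (him : ymin ≤ z.im) :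
    ‖heegTerm p D sq k Q z‖ ≤
      (ymin ^ 2 / (1 + ymin + 2 * X)) ^ (-(k : ℤ)) * mx (Q.1.1, Q.1.2.1) ^ (-(k : ℤ)) := by
  rw [norm_heegTerm]
  have hκ : 0 < ymin ^ 2 / (1 + ymin + 2 * X) := by positivity
  have hb := P_lower hD hX hy (hf_disc Q) hre him
  have hκM : 0 < ymin ^ 2 / (1 + ymin + 2 * X) * mx (Q.1.1, Q.1.2.1) :=
    mul_pos hκ (mx_pos _)
  rw [← mul_zpow]
  exact zpow_neg_anti hκM hb k

lemma summable_heeg (hD : 0 < D) (hDns : ¬ IsSquare D) (sq : ℚ_[p]) {k : ℕ} (hk : 3 ≤ k)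
    {z : ℂ} (hz : 0 < z.im) :
    Summable fun Q : HeegnerForm p D => ‖heegTerm p D sq k Q z‖ := by
  apply (summable_bound_heeg hDns hk ((z.im ^ 2 / (1 + z.im + 2 * |z.re|)) ^ (-(k : ℤ)))).of_nonneg_of_le
    (fun Q => norm_nonneg _)
  intro Q
  exact heegTerm_le hD sq k (abs_nonneg _) hz Q (le_refl _) (le_refl _)

lemma tlu_heeg (hD : 0 < D) (hDns : ¬ IsSquare D) (sq : ℚ_[p]) {k : ℕ} (hk : 3 ≤ k) :
    TendstoLocallyUniformlyOn
      (fun (T : Finset (HeegnerForm p D)) (z : ℂ) => ∑ Q ∈ T, heegTerm p D sq k Q z)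
      (fun z : ℂ => ∑' Q : HeegnerForm p D, heegTerm p D sq k Q z)
      atTop {z : ℂ | 0 < z.im} := by
  have hopen : IsOpen {z : ℂ | 0 < z.im} := isOpen_lt continuous_const Complex.continuous_im
  rw [tendstoLocallyUniformlyOn_iff_forall_isCompact hopen]
  intro K hKsub hK
  rcases K.eq_empty_or_nonempty with rfl | hne
  · intro u hu
    simp [Filter.eventually_atTop]
  · obtain ⟨zX, _, hzX⟩ := hK.exists_isMaxOn hne (continuous_abs.comp continuous_re).continuousOn
    obtain ⟨zy, hzyK, hzy⟩ := hK.exists_isMinOn hne continuous_im.continuousOn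
    have hy0 : 0 < zy.im := hKsub hzyK
    apply tendstoUniformlyOn_tsum
      (summable_bound_heeg hDns hk ((zy.im ^ 2 / (1 + zy.im + 2 * |zX.re|)) ^ (-(k : ℤ))))
    intro Q z hzK
    exact heegTerm_le hD sq k (abs_nonneg _) hy0 Q (hzX hzK) (hzy hzK)

lemma act_heeg_inj (hDns : ¬ IsSquare D) (a b c d : ℤ) (hdet : a * d - b * c = 1) :
    Function.Injective
      (fun Q : HeegnerForm p D => ((act a b c d Q.1).1, (act a b c d Q.1).2.1)) := by
  intro Q R h
  simp only [Prod.mk.injEq] at h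
  have hdQ : (act a b c d Q.1).2.1 ^ 2
      - 4 * (act a b c d Q.1).1 * (act a b c d Q.1).2.2 = D := by
    rw [act_disc, hdet, hf_disc Q]; ring
  have hdR : (act a b c d R.1).2.1 ^ 2
      - 4 * (act a b c d R.1).1 * (act a b c d R.1).2.2 = D := by
    rw [act_disc, hdet, hf_disc R]; ring
  have hA : (act a b c d Q.1).1 ≠ 0 := lead_ne_zero hDns hdQ
  have hC : (act a b c d Q.1).2.2 = (act a b c d R.1).2.2 := by
    apply third_eq (D := D) hA (h.2 ▸ hdQ)
    rw [← h.1, ← h.2] at hdR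
    exact h.2 ▸ hdR
  have hQR : act a b c d Q.1 = act a b c d R.1 := by
    apply Prod.ext h.1
    apply Prod.ext h.2
    exact hC
  apply Subtype.ext
  calc Q.1 = act d (-b) (-c) a (act a b c d Q.1) := (act_inv a b c d hdet Q.1).symm
    _ = act d (-b) (-c) a (act a b c d R.1) := by rw [hQR]
    _ = R.1 := act_inv a b c d hdet R.1

/-- the estimate used for vanishing at the cusps, uniform in `Re z`. -/
lemma infty_bound (hD : 0 < D) (hDns : ¬ IsSquare D) (sq : ℚ_[p]) {k : ℕ} (hk : 3 ≤ k)
    {a b c d : ℤ} (hdet : a * d - b * c = 1) {z : ℂ} (him : 1 ≤ z.im) :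
    ∑' Q : HeegnerForm p D, ‖P (act a b c d Q.1) z‖ ^ (-(k : ℤ))
      ≤ (z.im / 4) ^ (-(k : ℤ)) * ∑' w : ℤ × ℤ, mx w ^ (-(k : ℤ)) := by
  have hz0 : (0 : ℝ) < z.im := lt_of_lt_of_le one_pos him
  set n : ℤ := ⌊z.re⌋ with hn
  set z₀ : ℂ := z - (n : ℂ) with hz₀
  have hre0 : |z₀.re| ≤ 1 := by
    rw [hz₀]
    simp only [Complex.sub_re, Complex.intCast_re]
    rw [abs_le]
    constructor
    · simp only [hn]
      linarith [Int.fract_nonneg z.re, Int.self_sub_floor z.re]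
    · simp only [hn]
      linarith [(Int.fract_lt_one z.re).le, Int.self_sub_floor z.re]
  have him0 : z₀.im = z.im := by rw [hz₀]; simp
  -- rewrite each term via the shifted form
  have hshift : ∀ Q : HeegnerForm p D,
      P (act a b c d Q.1) z = P (act a (a * n + b) c (c * n + d) Q.1) z₀ := by
    intro Q
    have h1 : P (act 1 n 0 1 (act a b c d Q.1)) z₀
        = ((0 : ℂ) * z₀ + 1) ^ 2 *
          P (act a b c d Q.1) (((1 : ℂ) * z₀ + n) / ((0 : ℂ) * z₀ + 1)) := by
      have := P_act 1 n 0 1 (act a b c d Q.1) z₀ (by norm_num)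
      simpa using this
    rw [act_act] at h1
    simp only [mul_one, one_mul, zero_mul, mul_zero, zero_add, add_zero] at h1
    rw [h1]
    congr 1
    rw [div_one, hz₀]
    ring
  -- discriminants of the shifted forms
  have hdisc' : ∀ Q : HeegnerForm p D,
      (act a (a * n + b) c (c * n + d) Q.1).2.1 ^ 2
        - 4 * (act a (a * n + b) c (c * n + d) Q.1).1
          * (act a (a * n + b) c (c * n + d) Q.1).2.2 = D := by
    intro Q
    rw [act_disc, show a * (c * n + d) - (a * n + b) * c = 1 by linear_combination hdet,
      hf_disc Q]
    ring
  have hdet' : a * (c * n + d) - (a * n + b) * c = 1 := by linear_combination hdet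
  have hκ : z.im / 4 ≤ z.im ^ 2 / (1 + z.im + 2 * 1) := by
    rw [div_le_div_iff₀ (by norm_num) (by positivity)]
    nlinarith
  have hbound : ∀ Q : HeegnerForm p D,
      ‖P (act a b c d Q.1) z‖ ^ (-(k : ℤ))
        ≤ (z.im / 4) ^ (-(k : ℤ)) *
          mx ((act a (a * n + b) c (c * n + d) Q.1).1,
              (act a (a * n + b) c (c * n + d) Q.1).2.1) ^ (-(k : ℤ)) := by
    intro Q
    rw [hshift Q, ← mul_zpow]
    apply zpow_neg_anti (mul_pos (by positivity) (mx_pos _))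
    calc z.im / 4 * mx _ ≤ z.im ^ 2 / (1 + z.im + 2 * 1) * mx _ :=
          mul_le_mul_of_nonneg_right hκ (mx_pos _).le
        _ ≤ ‖P (act a (a * n + b) c (c * n + d) Q.1) z₀‖ :=
          P_lower hD (by norm_num) hz0 (hdisc' Q) hre0 (by rw [him0])
  have hsum2 : Summable (fun w : ℤ × ℤ => mx w ^ (-(k : ℤ))) := summable_mx_zpow hk
  have hsumJ : Summable (fun Q : HeegnerForm p D =>
      mx ((act a (a * n + b) c (c * n + d) Q.1).1,
          (act a (a * n + b) c (c * n + d) Q.1).2.1) ^ (-(k : ℤ))) :=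
    hsum2.comp_injective (act_heeg_inj hDns a (a * n + b) c (c * n + d) hdet')
  have hsumL : Summable (fun Q : HeegnerForm p D => ‖P (act a b c d Q.1) z‖ ^ (-(k : ℤ))) :=
    (hsumJ.mul_left ((z.im / 4) ^ (-(k : ℤ)))).of_nonneg_of_le
      (fun Q => zpow_nonneg (norm_nonneg _) _) hbound
  calc ∑' Q : HeegnerForm p D, ‖P (act a b c d Q.1) z‖ ^ (-(k : ℤ))
      ≤ ∑' Q : HeegnerForm p D, (z.im / 4) ^ (-(k : ℤ)) *
          mx ((act a (a * n + b) c (c * n + d) Q.1).1,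
              (act a (a * n + b) c (c * n + d) Q.1).2.1) ^ (-(k : ℤ)) :=
        Summable.tsum_le_tsum hbound hsumL (hsumJ.mul_left _)
    _ = (z.im / 4) ^ (-(k : ℤ)) * ∑' Q : HeegnerForm p D,
          mx ((act a (a * n + b) c (c * n + d) Q.1).1,
              (act a (a * n + b) c (c * n + d) Q.1).2.1) ^ (-(k : ℤ)) := tsum_mul_left
    _ ≤ (z.im / 4) ^ (-(k : ℤ)) * ∑' w : ℤ × ℤ, mx w ^ (-(k : ℤ)) := by
        apply mul_le_mul_of_nonneg_left _ (zpow_nonneg (by positivity) _)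
        exact Summable.tsum_le_tsum_of_inj _
          (act_heeg_inj hDns a (a * n + b) c (c * n + d) hdet')
          (fun w _ => zpow_nonneg (le_of_lt (mx_pos w)) _)
          (fun Q => le_refl _) hsumJ hsum2

end Summab

section Main

open scoped MatrixGroups

variable {p : ℕ} [Fact p.Prime] {D : ℤ}

lemma P_ne_zero (hD : 0 < D) {v : ℤ × ℤ × ℤ} (hdisc : v.2.1 ^ 2 - 4 * v.1 * v.2.2 = D)
    {z : ℂ} (hz : 0 < z.im) : P v z ≠ 0 := by
  intro h0
  have h1 := normSq_P v z
  rw [h0, norm_zero] at h1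
  have hdr : ((v.2.1 : ℝ)) ^ 2 - 4 * (v.1 : ℝ) * (v.2.2 : ℝ) = (D : ℝ) := by exact_mod_cast hdisc
  rw [hdr] at h1
  have hD1 : (1 : ℝ) ≤ (D : ℝ) := by exact_mod_cast hD
  nlinarith [sq_nonneg ((v.1 : ℝ) * (z.re ^ 2 + z.im ^ 2) + (v.2.1 : ℝ) * z.re + (v.2.2 : ℝ)),
    mul_pos hz hz]

lemma det_sl (γ : SL(2, ℤ)) : γ 0 0 * γ 1 1 - γ 0 1 * γ 1 0 = 1 := by
  have h := γ.prop
  rw [Matrix.det_fin_two] at h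
  exact h

lemma coe_smul_eq (γ : SL(2, ℤ)) (τ : UpperHalfPlane) :
    ((γ • τ : UpperHalfPlane) : ℂ)
      = ((γ 0 0 : ℂ) * (τ : ℂ) + (γ 0 1 : ℂ)) / ((γ 1 0 : ℂ) * (τ : ℂ) + (γ 1 1 : ℂ)) := by
  rw [UpperHalfPlane.specialLinearGroup_apply]
  simp only [UpperHalfPlane.coe_mk, algebraMap_int_eq, eq_intCast, Complex.ofReal_intCast]

/-- the function defined by the series, as a function on `ℍ`. -/
noncomputable def FF (p : ℕ) [Fact p.Prime] (D : ℤ) (sq : ℚ_[p]) (k : ℕ) :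
    UpperHalfPlane → ℂ :=
  fun τ => ∑' Q : HeegnerForm p D, heegTerm p D sq k Q (τ : ℂ)

open scoped ModularForm in
lemma FF_slash (hDns : ¬ IsSquare D) {sq : ℚ_[p]} (hsq : sq ^ 2 = (D : ℚ_[p])) (k : ℕ)
    (γ : SL(2, ℤ)) (hγ : γ ∈ CongruenceSubgroup.Gamma0 p) :
    FF p D sq k ∣[(2 * k : ℤ)] γ = FF p D sq k := by
  funext τ
  rw [ModularForm.slash_action_eq'_iff]
  have hdet := det_sl γ
  have hc : (p : ℤ) ∣ γ 1 0 := by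
    have h := CongruenceSubgroup.Gamma0_mem.mp hγ
    exact_mod_cast (ZMod.intCast_zmod_eq_zero_iff_dvd _ _).mp (by exact_mod_cast h)
  have hτ : 0 < (τ : ℂ).im := τ.2
  show FF p D sq k (γ • τ) = _
  unfold FF
  rw [coe_smul_eq γ τ, tsum_transform hDns hsq k hdet hc hτ]

open scoped ModularForm in
lemma FF_term_norm (hDns : ¬ IsSquare D) (sq : ℚ_[p]) (k : ℕ)
    {a b c d : ℤ} (hdet : a * d - b * c = 1) (Q : HeegnerForm p D) {z : ℂ} (hz : 0 < z.im) :
    ‖heegTerm p D sq k Q (((a : ℂ) * z + b) / ((c : ℂ) * z + d))‖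
        * ‖(c : ℂ) * z + d‖ ^ (-(2 * k : ℤ))
      = ‖P (act a b c d Q.1) z‖ ^ (-(k : ℤ)) := by
  have hcd : (c : ℂ) * z + d ≠ 0 := det_cd_ne_zero hdet hz
  rw [norm_heegTerm, P_act a b c d Q.1 z hcd, norm_mul, norm_pow, mul_zpow]
  have h2 : (‖(c : ℂ) * z + d‖ ^ 2) ^ (-(k : ℤ)) = ‖(c : ℂ) * z + d‖ ^ (-(2 * k : ℤ)) := by
    rw [← zpow_natCast (‖(c : ℂ) * z + d‖) 2, ← zpow_mul]
    norm_num
  rw [h2]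
  ring

open scoped ModularForm UpperHalfPlane in
lemma FF_zero_at_infty (hD : 0 < D) (hDns : ¬ IsSquare D) {sq : ℚ_[p]}
    (hsq : sq ^ 2 = (D : ℚ_[p])) {k : ℕ} (hk : 3 ≤ k) (A : SL(2, ℤ)) :
    UpperHalfPlane.IsZeroAtImInfty (FF p D sq k ∣[(2 * k : ℤ)] A) := by
  rw [UpperHalfPlane.isZeroAtImInfty_iff]
  intro ε hε
  set S := ∑' w : ℤ × ℤ, mx w ^ (-(k : ℤ)) with hS
  have hS0 : 0 ≤ S := tsum_nonneg (fun w => zpow_nonneg (mx_pos w).le _)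
  refine ⟨max 4 (4 * (S + 1) / ε), fun τ hτ => ?_⟩
  have h4 : (4 : ℝ) ≤ τ.im := le_trans (le_max_left _ _) hτ
  have h4' : 4 * (S + 1) / ε ≤ τ.im := le_trans (le_max_right _ _) hτ
  have hdet := det_sl A
  have hτim : 0 < (τ : ℂ).im := τ.2
  have hyim : (τ : ℂ).im = τ.im := UpperHalfPlane.coe_im τ
  -- unfold the slash action
  have h1 : (FF p D sq k ∣[(2 * k : ℤ)] A) τ
      = FF p D sq k (A • τ) * UpperHalfPlane.denom A τ ^ (-(2 * k : ℤ)) := by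
    exact ModularForm.SL_slash_apply _ _ _
  have him' : 0 < ((A • τ : UpperHalfPlane) : ℂ).im := (A • τ).2
  have hsummable := summable_heeg (p := p) hD hDns sq hk him'
  have hdenom : UpperHalfPlane.denom A τ = (A 1 0 : ℂ) * τ + A 1 1 :=
    ModularGroup.denom_apply A τ
  have h2 : ‖(FF p D sq k ∣[(2 * k : ℤ)] A) τ‖
      ≤ ∑' Q : HeegnerForm p D,
          ‖P (act (A 0 0) (A 0 1) (A 1 0) (A 1 1) Q.1) (τ : ℂ)‖ ^ (-(k : ℤ)) := by
    rw [h1, norm_mul, norm_zpow, hdenom]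
    calc ‖FF p D sq k (A • τ)‖ * ‖(A 1 0 : ℂ) * τ + A 1 1‖ ^ (-(2 * k : ℤ))
        ≤ (∑' Q : HeegnerForm p D, ‖heegTerm p D sq k Q ((A • τ : UpperHalfPlane) : ℂ)‖)
            * ‖(A 1 0 : ℂ) * τ + A 1 1‖ ^ (-(2 * k : ℤ)) := by
          apply mul_le_mul_of_nonneg_right (norm_tsum_le_tsum_norm hsummable)
            (zpow_nonneg (norm_nonneg _) _)
      _ = ∑' Q : HeegnerForm p D, ‖heegTerm p D sq k Q ((A • τ : UpperHalfPlane) : ℂ)‖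
            * ‖(A 1 0 : ℂ) * τ + A 1 1‖ ^ (-(2 * k : ℤ)) := tsum_mul_right.symm
      _ = ∑' Q : HeegnerForm p D,
            ‖P (act (A 0 0) (A 0 1) (A 1 0) (A 1 1) Q.1) (τ : ℂ)‖ ^ (-(k : ℤ)) := by
          apply tsum_congr
          intro Q
          rw [coe_smul_eq A τ]
          exact FF_term_norm hDns sq k hdet Q hτim
  have h3 := infty_bound (p := p) hD hDns sq hk hdet
    (z := (τ : ℂ)) (by rw [hyim]; linarith)
  refine le_trans (le_trans h2 h3) ?_
  -- numeric estimate
  rw [hyim]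
  have hy4 : (1 : ℝ) ≤ τ.im / 4 := by rw [le_div_iff₀ (by norm_num)]; linarith
  have hstep : (τ.im / 4) ^ (-(k : ℤ)) ≤ (τ.im / 4) ^ (-1 : ℤ) := by
    apply zpow_le_zpow_right₀ hy4
    omega
  have hfin : (τ.im / 4) ^ (-1 : ℤ) * S ≤ ε := by
    rw [zpow_neg_one]
    have hy0 : 0 < τ.im := by linarith
    have hSε : 4 * (S + 1) ≤ ε * τ.im := by
      rw [div_le_iff₀ hε] at h4'
      linarith
    rw [show ((τ.im / 4)⁻¹ : ℝ) = 4 / τ.im by field_simp, div_mul_eq_mul_div,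
      div_le_iff₀ hy0]
    nlinarith
  calc (τ.im / 4) ^ (-(k : ℤ)) * S ≤ (τ.im / 4) ^ (-1 : ℤ) * S :=
      mul_le_mul_of_nonneg_right hstep hS0
    _ ≤ ε := hfin

open scoped Manifold in
lemma FF_holo (hD : 0 < D) (hDns : ¬ IsSquare D) (sq : ℚ_[p]) {k : ℕ} (hk : 3 ≤ k) :
    MDifferentiable 𝓘(ℂ) 𝓘(ℂ) (FF p D sq k) := by
  have hopen : IsOpen {z : ℂ | 0 < z.im} := isOpen_lt continuous_const Complex.continuous_im
  have hdiff : DifferentiableOn ℂ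
      (fun z : ℂ => ∑' Q : HeegnerForm p D, heegTerm p D sq k Q z) {z : ℂ | 0 < z.im} := by
    apply (tlu_heeg hD hDns sq hk).differentiableOn ?_ hopen
    filter_upwards with T
    apply DifferentiableOn.fun_sum
    intro Q _
    unfold heegTerm
    apply DifferentiableOn.const_mul
    apply DifferentiableOn.zpow
    · apply Differentiable.differentiableOn
      fun_prop
    · left
      intro z hz
      exact P_ne_zero hD (hf_disc Q) hz
  intro τ
  have h1 : DifferentiableAt ℂ
      (fun z : ℂ => ∑' Q : HeegnerForm p D, heegTerm p D sq k Q z) (τ : ℂ) :=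
    hdiff.differentiableAt (hopen.mem_nhds τ.2)
  exact (h1.mdifferentiableAt).comp τ τ.mdifferentiable_coe

end Main
end HF13

/-- Let `p` be an odd prime, `k ≥ 3` odd, `D > 0` a nonsquare integer
which is a nonzero square mod `p`, and fix `√D ∈ ℚ_p`.  Then the series
`f_{k,D}^{(p)}(z) = Σ_Q (γ_Q·e₀)·Q(z,1)^{−k}` over Heegner forms of discriminant `D`
converges absolutely and locally uniformly on the upper half-plane, and defines a cusp
form of weight `2k` for `Γ₀(p)`; in particular it satisfies the weight `2k`
transformation law under `Γ₀(p)`. -/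
theorem stmt13 (p : ℕ) [Fact p.Prime] (hp : p ≠ 2)
    (k : ℕ) (hk : 3 ≤ k) (hkodd : Odd k)
    (D : ℤ) (hD : 0 < D) (hDns : ¬ IsSquare D)
    (hDp : IsSquare (D : ZMod p) ∧ (D : ZMod p) ≠ 0)
    (sq : ℚ_[p]) (hsq : sq ^ 2 = (D : ℚ_[p])) :
    (∀ z : ℂ, 0 < z.im → Summable fun Q : HeegnerForm p D => ‖heegTerm p D sq k Q z‖) ∧
    TendstoLocallyUniformlyOn
      (fun (T : Finset (HeegnerForm p D)) (z : ℂ) => ∑ Q ∈ T, heegTerm p D sq k Q z)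
      (fun z : ℂ => ∑' Q : HeegnerForm p D, heegTerm p D sq k Q z)
      atTop {z : ℂ | 0 < z.im} ∧
    (∃ f : CuspForm (CongruenceSubgroup.Gamma0 p) (2 * k),
      ∀ τ : UpperHalfPlane, f τ = ∑' Q : HeegnerForm p D, heegTerm p D sq k Q (τ : ℂ)) ∧
    (∀ a b c d : ℤ, a * d - b * c = 1 → (p : ℤ) ∣ c → ∀ z : ℂ, 0 < z.im →
      ((c : ℂ) * z + (d : ℂ)) ^ (-(2 * k : ℤ)) *
          ∑' Q : HeegnerForm p D,
            heegTerm p D sq k Q (((a : ℂ) * z + (b : ℂ)) / ((c : ℂ) * z + (d : ℂ))) =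
        ∑' Q : HeegnerForm p D, heegTerm p D sq k Q z) := by
  haveI : NeZero p := ⟨(Fact.out : p.Prime).ne_zero⟩
  refine ⟨fun z hz => HF13.summable_heeg hD hDns sq hk hz,
    HF13.tlu_heeg hD hDns sq hk,
    ⟨⟨⟨HF13.FF p D sq k, fun γ hγ => by
          obtain ⟨g, hg, rfl⟩ := Subgroup.mem_map.mp hγ
          exact HF13.FF_slash hDns hsq k g hg⟩,
       HF13.FF_holo hD hDns sq hk,
       fun hc => (OnePoint.isZeroAt_iff_forall_SL2Z
          ((Subgroup.IsArithmetic.isCusp_iff_isCusp_SL2Z _).mp hc)).mpr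
          fun A _ => HF13.FF_zero_at_infty hD hDns hsq hk A⟩,
      fun τ => rfl⟩, ?_⟩
  intro a b c d hdet hc z hz
  rw [HF13.tsum_transform hDns hsq k hdet hc hz, ← mul_assoc,
    ← zpow_add₀ (HF13.det_cd_ne_zero hdet hz)]
  norm_num
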